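/- For complex z, w with |z|, |w| sufficiently large, the double series ∑_{k,m ≥ 0} M_{2k+1,2m+1}(Ω) z^{-2k-2} \bar{w}^{-2m-2}, where M_{2k+1,2m+1}(Ω) = (1/(2(k+m+2))) C(k+m+2, k+1), converges and equals -(1/2) log(1 - 1/((z²-1)(\bar{w}²-1))). -/

import Mathlib

set_option autoImplicit false
set_option maxHeartbeats 1000000

open Real

/-- The odd-odd complex moments of the Bernoulli lemniscate:
`M_{2k+1,2m+1} = (1/(2(k+m+2))) * C(k+m+2, k+1)`. -/
noncomputable def oddMoment (k m : ℕ) : ℂ :=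
  ((1 : ℂ) / (2 * ((k : ℂ) + m + 2))) * (Nat.choose (k + m + 2) (k + 1) : ℂ)

lemma my_choose_le_two_pow (n k : ℕ) : n.choose k ≤ 2 ^ n := by
  rcases le_or_gt k n with h | h
  · calc n.choose k ≤ ∑ m ∈ Finset.range (n + 1), n.choose m :=
        Finset.single_le_sum (fun i _ => Nat.zero_le _)
          (Finset.mem_range.mpr (Nat.lt_succ_of_le h))
    _ = 2 ^ n := Nat.sum_range_choose n
  · rw [Nat.choose_eq_zero_of_lt h]; exact Nat.zero_le _

lemma re_pos_of_abs_lt_one {x : ℂ} (h : ‖(1 - x)‖ < 1) : 0 < x.re := by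
  have h1 : (1 - x).re ≤ ‖(1 - x)‖ := Complex.re_le_norm _
  have h2 : (1 - x).re = 1 - x.re := by simp
  linarith

lemma log_mul_of_re_pos {a b : ℂ} (ha : 0 < a.re) (hb : 0 < b.re) :
    Complex.log (a * b) = Complex.log a + Complex.log b := by
  have ha0 : a ≠ 0 := fun h => by simp [h] at ha
  have hb0 : b ≠ 0 := fun h => by simp [h] at hb
  rw [Complex.log_mul_eq_add_log_iff ha0 hb0]
  have h1 := Complex.abs_arg_lt_pi_div_two_iff.mpr (Or.inl ha)
  have h2 := Complex.abs_arg_lt_pi_div_two_iff.mpr (Or.inl hb)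
  rw [abs_lt] at h1 h2
  constructor
  · linarith [h1.1, h2.1]
  · linarith [h1.2, h2.2]

lemma hasSum_of_antidiagonal {F : ℕ × ℕ → ℂ} {g : ℕ → ℂ} {S : ℂ}
    (hsF : Summable F) (hgsum : HasSum g S)
    (hfib : ∀ n : ℕ, HasSum (fun c : Finset.HasAntidiagonal.antidiagonal n => F c.1) (g n)) :
    HasSum F S := by
  have hsig : Summable (F ∘ Finset.HasAntidiagonal.sigmaAntidiagonalEquivProd) :=
    (Equiv.summable_iff Finset.HasAntidiagonal.sigmaAntidiagonalEquivProd).mpr hsF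
  have := HasSum.sigma_of_hasSum hgsum (fun n => hfib n) hsig
  exact (Equiv.hasSum_iff Finset.HasAntidiagonal.sigmaAntidiagonalEquivProd).mp this

lemma key_hasSum {u v : ℂ} (hu : ‖u‖ < 1 / 9) (hv : ‖v‖ < 1 / 9) :
    HasSum (fun p : ℕ × ℕ => oddMoment p.1 p.2 * u ^ (p.1 + 1) * v ^ (p.2 + 1))
      (-(1 / 2) * (Complex.log (1 - (u + v)) - Complex.log (1 - u) - Complex.log (1 - v))) := by
  set F : ℕ × ℕ → ℂ := fun p => oddMoment p.1 p.2 * u ^ (p.1 + 1) * v ^ (p.2 + 1) with hF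
  have hu0 : (0 : ℝ) ≤ ‖u‖ := norm_nonneg u
  have hv0 : (0 : ℝ) ≤ ‖v‖ := norm_nonneg v
  -- norm bound
  have hbound : ∀ p : ℕ × ℕ,
      ‖F p‖ ≤ (2 * ‖u‖) ^ (p.1 + 1) * (2 * ‖v‖) ^ (p.2 + 1) := by
    rintro ⟨k, m⟩
    have hM : ‖oddMoment k m‖ ≤ (2 : ℝ) ^ (k + m + 2) := by
      rw [oddMoment, norm_mul]
      have hc : ‖((Nat.choose (k + m + 2) (k + 1) : ℕ) : ℂ)‖ ≤ (2 : ℝ) ^ (k + m + 2) := by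
        rw [Complex.norm_natCast]
        exact_mod_cast my_choose_le_two_pow (k + m + 2) (k + 1)
      have hd : ‖(1 : ℂ) / (2 * ((k : ℂ) + m + 2))‖ ≤ 1 := by
        rw [norm_div, norm_one]
        have he : (2 * ((k : ℂ) + m + 2)) = ((2 * (k + m + 2) : ℕ) : ℂ) := by push_cast; ring
        rw [he, Complex.norm_natCast]
        rw [div_le_one (by positivity)]
        exact_mod_cast Nat.one_le_iff_ne_zero.mpr (by omega)
      calc ‖(1 : ℂ) / (2 * ((k : ℂ) + m + 2))‖ * ‖((Nat.choose (k + m + 2) (k + 1) : ℕ) : ℂ)‖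
          ≤ 1 * ((2 : ℝ) ^ (k + m + 2)) := by
            apply mul_le_mul hd hc (norm_nonneg _) zero_le_one
        _ = (2 : ℝ) ^ (k + m + 2) := one_mul _
    have h2 : (2 : ℝ) ^ (k + m + 2) = 2 ^ (k + 1) * 2 ^ (m + 1) := by
      rw [← pow_add]; congr 1; omega
    calc ‖F (k, m)‖ = ‖oddMoment k m‖ * ‖u‖ ^ (k + 1) * ‖v‖ ^ (m + 1) := by
          simp [hF, norm_mul, norm_pow]
      _ ≤ (2 : ℝ) ^ (k + m + 2) * ‖u‖ ^ (k + 1) * ‖v‖ ^ (m + 1) := by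
          have h3 : (0:ℝ) ≤ ‖u‖ ^ (k+1) := by positivity
          have h4 : (0:ℝ) ≤ ‖v‖ ^ (m+1) := by positivity
          apply mul_le_mul_of_nonneg_right (mul_le_mul_of_nonneg_right hM h3) h4
      _ = (2 * ‖u‖) ^ (k + 1) * (2 * ‖v‖) ^ (m + 1) := by
          rw [mul_pow, mul_pow, h2]; ring
  -- summability
  have hru : 2 * ‖u‖ < 1 := by linarith
  have hrv : 2 * ‖v‖ < 1 := by linarith
  have hsu : Summable (fun k : ℕ => (2 * ‖u‖) ^ (k + 1)) := by
    simpa [pow_succ'] using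
      (summable_geometric_of_lt_one (by positivity) hru).mul_left (2 * ‖u‖)
  have hsv : Summable (fun m : ℕ => (2 * ‖v‖) ^ (m + 1)) := by
    simpa [pow_succ'] using
      (summable_geometric_of_lt_one (by positivity) hrv).mul_left (2 * ‖v‖)
  have hsprod : Summable (fun p : ℕ × ℕ =>
      (2 * ‖u‖) ^ (p.1 + 1) * (2 * ‖v‖) ^ (p.2 + 1)) :=
    Summable.mul_of_nonneg hsu hsv (fun k => by positivity) (fun m => by positivity)
  have hsF : Summable F :=
    Summable.of_norm (hsprod.of_nonneg_of_le (fun p => norm_nonneg _) hbound)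
  -- the diagonal sums
  -- hasSum of the diagonal sums
  have huv1 : ‖u + v‖ < 1 := by
    calc ‖u + v‖ ≤ ‖u‖ + ‖v‖ := norm_add_le u v
      _ < 1 := by linarith
  have hu1 : ‖u‖ < 1 := by linarith
  have hv1 : ‖v‖ < 1 := by linarith
  have h1 := Complex.hasSum_taylorSeries_neg_log huv1
  have h2 := Complex.hasSum_taylorSeries_neg_log hu1
  have h3 := Complex.hasSum_taylorSeries_neg_log hv1
  have h4 := ((h1.sub h2).sub h3).mul_left ((1 : ℂ) / 2)
  have h5 := (hasSum_nat_add_iff'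
    (f := fun n : ℕ => (1 : ℂ) / 2 * ((u + v) ^ n / n - u ^ n / n - v ^ n / n)) 2).mpr h4
  have hgsum : HasSum (fun n : ℕ =>
      (1 / (2 * ((n : ℂ) + 2))) * ((u + v) ^ (n + 2) - u ^ (n + 2) - v ^ (n + 2)))
      (-(1 / 2) * (Complex.log (1 - (u + v)) - Complex.log (1 - u) - Complex.log (1 - v))) := by
    convert h5 using 1
    · rfl
    · funext n
      have hn0 : ((n : ℂ) + 2) ≠ 0 := by
        have h : ((n : ℂ) + 2) = ((n + 2 : ℕ) : ℂ) := by push_cast; ring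
        rw [h]
        exact Nat.cast_ne_zero.mpr (by omega)
      push_cast
      field_simp
    · rw [Finset.sum_range_succ, Finset.sum_range_succ, Finset.sum_range_zero]
      norm_num
      ring
  -- fiber sums
  have hfib : ∀ n : ℕ, HasSum (fun c : Finset.HasAntidiagonal.antidiagonal n => F c.1)
      ((1 / (2 * ((n : ℂ) + 2))) * ((u + v) ^ (n + 2) - u ^ (n + 2) - v ^ (n + 2))) := by
    intro n
    have hft := hasSum_fintype (fun c : Finset.HasAntidiagonal.antidiagonal n => F c.1)
    convert hft using 1
    rw [Finset.sum_coe_sort (Finset.HasAntidiagonal.antidiagonal n) F,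
      Finset.Nat.sum_antidiagonal_eq_sum_range_succ_mk]
    -- compute the finite sum
    have hbin : ∑ i ∈ Finset.range (n + 1),
        (((n + 2).choose (i + 1) : ℂ) * u ^ (i + 1) * v ^ (n - i + 1))
        = (u + v) ^ (n + 2) - u ^ (n + 2) - v ^ (n + 2) := by
      have h := add_pow u v (n + 2)
      rw [Finset.sum_range_succ, Finset.sum_range_succ'] at h
      simp only [pow_zero, one_mul, Nat.sub_self, Nat.choose_zero_right, Nat.choose_self,
        Nat.cast_one, mul_one, Nat.sub_zero] at h
      rw [h]
      have hc : ∀ i ∈ Finset.range (n + 1),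
          ((n + 2).choose (i + 1) : ℂ) * u ^ (i + 1) * v ^ (n - i + 1)
          = u ^ (i + 1) * v ^ (n + 2 - (i + 1)) * ((n + 2).choose (i + 1) : ℂ) := by
        intro i hi
        have hi' : i ≤ n := Nat.lt_succ_iff.mp (Finset.mem_range.mp hi)
        have he : n + 2 - (i + 1) = n - i + 1 := by omega
        rw [he]; ring
      rw [← Finset.sum_congr rfl hc]
      ring
    have hterm : ∀ i ∈ Finset.range (n + 1),
        F (i, n - i) = (1 / (2 * ((n : ℂ) + 2))) *
          (((n + 2).choose (i + 1) : ℂ) * u ^ (i + 1) * v ^ (n - i + 1)) := by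
      intro i hi
      have hi' : i ≤ n := Nat.lt_succ_iff.mp (Finset.mem_range.mp hi)
      simp only [hF, oddMoment]
      have e1 : i + (n - i) + 2 = n + 2 := by omega
      have e2 : (i : ℂ) + ((n - i : ℕ) : ℂ) + 2 = (n : ℂ) + 2 := by
        push_cast [Nat.cast_sub hi']; ring
      rw [e1, e2]
      ring
    rw [Finset.sum_congr rfl hterm, ← Finset.mul_sum, hbin]
  -- assemble
  exact hasSum_of_antidiagonal hsF hgsum hfib

/-- For `|z|, |w|` sufficiently large, the double series
`∑ M_{2k+1,2m+1} z^{-2k-2} conj(w)^{-2m-2}` converges and equals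
`-(1/2) log(1 - 1/((z²-1)(conj(w)²-1)))`. -/
theorem bernoulli_odd_series :
    ∃ R : ℝ, 0 < R ∧ ∀ z w : ℂ, R < ‖z‖ → R < ‖w‖ →
      HasSum
        (fun p : ℕ × ℕ =>
          oddMoment p.1 p.2 * (z ^ (2 * p.1 + 2))⁻¹ * ((starRingEnd ℂ w) ^ (2 * p.2 + 2))⁻¹)
        (-(1 / 2) * Complex.log (1 - 1 / ((z ^ 2 - 1) * ((starRingEnd ℂ w) ^ 2 - 1)))) := by
  refine ⟨3, by norm_num, fun z w hz hw => ?_⟩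
  set u : ℂ := (z ^ 2)⁻¹ with hu_def
  set v : ℂ := ((starRingEnd ℂ w) ^ 2)⁻¹ with hv_def
  have hz9 : (9 : ℝ) < ‖(z ^ 2)‖ := by
    rw [norm_pow]
    nlinarith [norm_nonneg z]
  have hw9 : (9 : ℝ) < ‖((starRingEnd ℂ w) ^ 2)‖ := by
    rw [norm_pow, Complex.norm_conj]
    nlinarith [norm_nonneg w]
  have hu : ‖u‖ < 1 / 9 := by
    rw [hu_def, norm_inv]
    rw [inv_lt_comm₀ (by linarith) (by norm_num)]
    · linarith
  have hv : ‖v‖ < 1 / 9 := by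
    rw [hv_def, norm_inv]
    rw [inv_lt_comm₀ (by linarith) (by norm_num)]
    · linarith
  have hz2 : z ^ 2 ≠ 0 := by
    intro h; rw [h] at hz9; simp at hz9; linarith
  have hw2 : (starRingEnd ℂ w) ^ 2 ≠ 0 := by
    intro h; rw [h] at hw9; simp at hw9; linarith
  have hu0 : u ≠ 0 := inv_ne_zero hz2
  have hv0 : v ≠ 0 := inv_ne_zero hw2
  have hzu : z ^ 2 = u⁻¹ := by rw [hu_def, inv_inv]
  have hwv : (starRingEnd ℂ w) ^ 2 = v⁻¹ := by rw [hv_def, inv_inv]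
  have h1u : (1 : ℂ) - u ≠ 0 := by
    intro h
    have : u = 1 := by linear_combination -h
    rw [this] at hu; simp at hu; linarith
  have h1v : (1 : ℂ) - v ≠ 0 := by
    intro h
    have : v = 1 := by linear_combination -h
    rw [this] at hv; simp at hv; linarith
  -- abs bounds for real-part positivity
  have hau := norm_nonneg u
  have hav := norm_nonneg v
  have hre_u : 0 < ((1 : ℂ) - u).re := by
    apply re_pos_of_abs_lt_one
    have : (1 : ℂ) - (1 - u) = u := by ring
    rw [this]; linarith
  have hre_v : 0 < ((1 : ℂ) - v).re := by
    apply re_pos_of_abs_lt_one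
    have : (1 : ℂ) - (1 - v) = v := by ring
    rw [this]; linarith
  set b : ℂ := (1 - u) * (1 - v) with hb_def
  have hb0 : b ≠ 0 := mul_ne_zero h1u h1v
  have habs_b_lb : (64 : ℝ) / 81 ≤ ‖b‖ := by
    rw [hb_def, norm_mul]
    have l1 : (8 : ℝ) / 9 ≤ ‖(1 - u)‖ := by
      have := norm_sub_norm_le (1 : ℂ) u
      simp only [norm_one] at this
      linarith
    have l2 : (8 : ℝ) / 9 ≤ ‖(1 - v)‖ := by
      have := norm_sub_norm_le (1 : ℂ) v
      simp only [norm_one] at this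
      linarith
    nlinarith
  have hre_b : 0 < b.re := by
    apply re_pos_of_abs_lt_one
    have e : (1 : ℂ) - b = u + v - u * v := by rw [hb_def]; ring
    rw [e]
    calc ‖(u + v - u * v)‖ ≤ ‖(u + v)‖ + ‖(u * v)‖ :=
          norm_sub_le _ _
      _ ≤ ‖u‖ + ‖v‖ + ‖u‖ * ‖v‖ := by
          rw [norm_mul]
          have := norm_add_le u v
          linarith
      _ < 1 := by nlinarith
  set T : ℂ := (1 - (u + v)) / b with hT_def
  have hTb : (1 : ℂ) - T = u * v / b := by
    rw [hT_def, hb_def]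
    field_simp
    ring
  have hre_T : 0 < T.re := by
    apply re_pos_of_abs_lt_one
    rw [hTb, norm_div, norm_mul]
    rw [div_lt_one (by linarith)]
    nlinarith
  have hT0 : T ≠ 0 := fun h => by simp [h] at hre_T
  -- the log identity
  have hlogsplit : Complex.log (1 - (u + v)) =
      Complex.log T + (Complex.log (1 - u) + Complex.log (1 - v)) := by
    have e : (1 : ℂ) - (u + v) = T * b := by
      rw [hT_def]; field_simp
    rw [e, log_mul_of_re_pos hre_T hre_b, hb_def, log_mul_of_re_pos hre_u hre_v]
  -- the algebraic identity for the argument of log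
  have hA : (1 : ℂ) - 1 / ((z ^ 2 - 1) * ((starRingEnd ℂ w) ^ 2 - 1)) = T := by
    rw [hzu, hwv, hT_def, hb_def]
    have hu1' : u⁻¹ - 1 ≠ 0 := by
      rw [ne_eq, sub_eq_zero]
      intro h
      have : u = 1 := by rw [← inv_inv u, h]; simp
      rw [this] at hu; simp at hu; linarith
    have hv1' : v⁻¹ - 1 ≠ 0 := by
      rw [ne_eq, sub_eq_zero]
      intro h
      have : v = 1 := by rw [← inv_inv v, h]; simp
      rw [this] at hv; simp at hv; linarith
    field_simp
    ring
  rw [hA]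
  have htarget : -(1 / 2 : ℂ) * Complex.log T =
      -(1 / 2) * (Complex.log (1 - (u + v)) - Complex.log (1 - u) - Complex.log (1 - v)) := by
    rw [hlogsplit]; ring
  rw [htarget]
  have hK := key_hasSum hu hv
  convert hK using 1
  funext p
  have e1 : 2 * p.1 + 2 = 2 * (p.1 + 1) := by ring
  have e2 : 2 * p.2 + 2 = 2 * (p.2 + 1) := by ring
  rw [e1, e2, pow_mul, pow_mul, hu_def, hv_def, inv_pow, inv_pow]
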